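/- For 0 < β < 1 with p = ⌈1/β⌉ − 1 and integer 2 ≤ t ≤ p, with g_r(β) as defined, one has (t−1+(t+1)(p−2t+2)β)·g_{t+1}(β) = (1−tβ)(p−t+1)β·g_t(β) + (t−1)(t+2)·g_{t+2}(β). -/
import Mathlib


/-- The density `g_r(β)` of `r`-cliques in the conjectured extremal graphs, with
clique-number parameter `p`. -/
noncomputable def gpoly (p r : ℕ) (β : ℝ) : ℝ :=
  (Nat.choose (p - 1) r : ℝ) * β ^ r
    + (Nat.choose (p - 1) (r - 1) : ℝ) * (1 - ((p : ℝ) - 1) * β) * β ^ (r - 1)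
    + (1 / 2) * (Nat.choose (p - 1) (r - 2) : ℝ) * (1 - (p : ℝ) * β)
        * (1 - ((p : ℝ) - 1) * β) * β ^ (r - 2)

lemma ch (n k : ℕ) : ((n.choose (k+1)):ℝ) * ((k:ℝ)+1) = (n.choose k : ℝ) * ((n:ℝ) - k) := by
  rcases lt_or_ge k n with h | h
  · have := Nat.choose_succ_right_eq n k
    have hc := congrArg (Nat.cast (R := ℝ)) this
    push_cast [Nat.cast_sub h.le] at hc
    linarith
  · rcases h.lt_or_eq with h | h
    · simp [Nat.choose_eq_zero_of_lt h, Nat.choose_eq_zero_of_lt (h.trans (Nat.lt_succ_self k))]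
    · simp [h, Nat.choose_eq_zero_of_lt (Nat.lt_succ_self n)]

lemma chdiv (n k : ℕ) : ((n.choose (k+1)):ℝ) = (n.choose k : ℝ) * ((n:ℝ) - k) / ((k:ℝ)+1) := by
  rw [eq_div_iff (by positivity)]; exact ch n k

theorem stmt_14 (β : ℝ) (hβ0 : 0 < β) (hβ1 : β < 1)
    (p : ℕ) (hp : p = ⌈1 / β⌉₊ - 1) (t : ℕ) (ht : 2 ≤ t) (htp : t ≤ p) :
    ((t : ℝ) - 1 + ((t : ℝ) + 1) * ((p : ℝ) - 2 * t + 2) * β) * gpoly p (t + 1) β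
      = (1 - (t : ℝ) * β) * ((p : ℝ) - t + 1) * β * gpoly p t β
        + ((t : ℝ) - 1) * ((t : ℝ) + 2) * gpoly p (t + 2) β := by
  clear hp
  obtain ⟨a, rfl⟩ : ∃ a, t = a + 2 := ⟨t - 2, by omega⟩
  obtain ⟨n, rfl⟩ : ∃ n, p = n + 1 := ⟨p - 1, by omega⟩
  have h1 := chdiv n a
  have h2 := chdiv n (a+1)
  have h3 := chdiv n (a+2)
  have h4 := chdiv n (a+3)
  push_cast at h1 h2 h3 h4 ⊢
  simp only [gpoly, show a+2+1 = a+3 from rfl, show a+2+2 = a+4 from rfl,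
    show a+3-1 = a+2 from rfl, show a+3-2 = a+1 from rfl, show a+4-1 = a+3 from rfl,
    show a+4-2 = a+2 from rfl, show a+2-1 = a+1 from rfl, show a+2-2 = a from rfl,
    Nat.add_sub_cancel, show n+1-1 = n from rfl]
  rw [show a+4 = a+3+1 from rfl, show a+3 = a+2+1 from rfl, show a+2 = a+1+1 from rfl] at *
  rw [h4, h3, h2, h1]
  push_cast
  have ha1 : ((a:ℝ)+1) ≠ 0 := by positivity
  have ha2 : ((a:ℝ)+1+1) ≠ 0 := by positivity
  have ha3 : ((a:ℝ)+1+1+1) ≠ 0 := by positivity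
  have ha4 : ((a:ℝ)+1+1+1+1) ≠ 0 := by positivity
  field_simp
  ring
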